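/- Let K be a Galois number field of degree k with ring of integers O_K. For each positive integer n there exists a function μ_n on integral ideals of O_K such that (i) for every nonzero integral ideal 𝔮, 1_{n | N𝔮} = Σ_𝔫 μ_n(𝔫)·1_{𝔫 | 𝔮}; (ii) μ_n is supported on ideals 𝔫 with n* | N𝔫 and N𝔫 | n^k; and (iii) |μ_n(𝔮)| ≤ 2^{k·ω(n)} for every ideal 𝔮, where ω(n) is the number of distinct prime divisors of n. -/

import Mathlib

set_option maxHeartbeats 2000000

open NumberField Classical

noncomputable section

open Ideal UniqueFactorizationMonoid

section AuxCombinatorics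

open Finset in
private lemma finsetval_le_multiset {α : Type*} [DecidableEq α] {t : Multiset α} {T : Finset α}
    (h : T ⊆ t.toFinset) : T.val ≤ t := by
  rw [Multiset.le_iff_count]
  intro a
  by_cases ha : a ∈ T
  · have : a ∈ t.toFinset := h ha
    rw [Multiset.mem_toFinset, ← Multiset.count_pos] at this
    have hc : Multiset.count a T.val = 1 :=
      Multiset.count_eq_one_of_mem T.nodup ha
    omega
  · rw [Multiset.count_eq_zero_of_notMem ha]
    omega

open Finset in
private lemma aux_moebius {α : Type*} [DecidableEq α] (F : Multiset α → ℤ) (s : Multiset α) :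
    ∑ t ∈ s.powerset.toFinset, ∑ T ∈ t.toFinset.powerset, (-1:ℤ)^T.card * F (t - T.val) = F s := by
  have key : ∑ p ∈ s.powerset.toFinset.sigma (fun t => t.toFinset.powerset),
      (-1:ℤ)^p.2.card * F (p.1 - p.2.val)
      = ∑ p ∈ s.powerset.toFinset.sigma (fun u => (s - u).toFinset.powerset),
      (-1:ℤ)^p.2.card * F p.1 := by
    apply Finset.sum_nbij' (fun p => ⟨p.1 - p.2.val, p.2⟩) (fun p => ⟨p.1 + p.2.val, p.2⟩)
    · rintro ⟨t, T⟩ hp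
      simp only [Finset.mem_sigma, Multiset.mem_toFinset, Multiset.mem_powerset,
        Finset.mem_powerset] at hp ⊢
      obtain ⟨hts, hTt⟩ := hp
      constructor
      · exact le_trans (Multiset.sub_le_self _ _) hts
      · intro a ha
        have h1 : a ∈ t.toFinset := hTt ha
        rw [Multiset.mem_toFinset, ← Multiset.count_pos] at h1
        have h2 := finsetval_le_multiset hTt
        have hc : Multiset.count a T.val = 1 :=
          Multiset.count_eq_one_of_mem T.nodup ha
        have h3 : Multiset.count a t ≤ Multiset.count a s := Multiset.le_iff_count.mp hts a
        rw [Multiset.mem_toFinset, ← Multiset.count_pos, Multiset.count_sub,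
          Multiset.count_sub, hc]
        omega
    · rintro ⟨u, T⟩ hp
      simp only [Finset.mem_sigma, Multiset.mem_toFinset, Multiset.mem_powerset,
        Finset.mem_powerset] at hp ⊢
      obtain ⟨hus, hTu⟩ := hp
      constructor
      · rw [Multiset.le_iff_count]
        intro a
        rw [Multiset.count_add]
        by_cases ha : a ∈ T
        · have h1 : a ∈ (s - u).toFinset := hTu ha
          rw [Multiset.mem_toFinset, ← Multiset.count_pos, Multiset.count_sub] at h1
          have hc : Multiset.count a T.val = 1 := Multiset.count_eq_one_of_mem T.nodup ha
          omega
        · rw [Multiset.count_eq_zero_of_notMem ha]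
          have := Multiset.le_iff_count.mp hus a
          omega
      · intro a ha
        rw [Multiset.mem_toFinset, ← Multiset.count_pos, Multiset.count_add]
        have hc : Multiset.count a T.val = 1 :=
          Multiset.count_eq_one_of_mem T.nodup ha
        omega
    · rintro ⟨t, T⟩ hp
      simp only [Finset.mem_sigma, Multiset.mem_toFinset, Multiset.mem_powerset,
        Finset.mem_powerset] at hp
      have := finsetval_le_multiset hp.2
      show (⟨t - T.val + T.val, T⟩ : Σ _ : Multiset α, Finset α) = ⟨t, T⟩
      rw [tsub_add_cancel_of_le this]
    · rintro ⟨u, T⟩ _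
      show (⟨u + T.val - T.val, T⟩ : Σ _ : Multiset α, Finset α) = ⟨u, T⟩
      rw [add_tsub_cancel_right]
    · rintro ⟨t, T⟩ _
      rfl
  have lhs_eq : (∑ t ∈ s.powerset.toFinset, ∑ T ∈ t.toFinset.powerset,
      (-1:ℤ)^T.card * F (t - T.val))
      = ∑ p ∈ s.powerset.toFinset.sigma (fun t => t.toFinset.powerset),
        (-1:ℤ)^p.2.card * F (p.1 - p.2.val) := (Finset.sum_sigma _ _ (fun p : Σ _ : Multiset α, Finset α => (-1:ℤ)^p.2.card * F (p.1 - p.2.val))).symm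
  rw [lhs_eq, key, Finset.sum_sigma]
  have step : ∀ u ∈ s.powerset.toFinset,
      ∑ T ∈ (s - u).toFinset.powerset, (-1:ℤ)^T.card * F u
      = if u = s then F s else 0 := by
    intro u hu
    rw [Multiset.mem_toFinset, Multiset.mem_powerset] at hu
    rw [← Finset.sum_mul, Finset.sum_powerset_neg_one_pow_card]
    by_cases h : u = s
    · subst h
      simp
    · have : s - u ≠ 0 := by
        intro hz
        exact h (le_antisymm hu (tsub_eq_zero_iff_le.mp hz))
      rw [if_neg (fun he => this (Multiset.toFinset_eq_empty.mp he)), zero_mul, if_neg h]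
  rw [Finset.sum_congr rfl step, Finset.sum_ite_eq' _ s, if_pos]
  rw [Multiset.mem_toFinset, Multiset.mem_powerset]

private lemma aux_bound {α : Type*} [DecidableEq α] (F : Multiset α → ℤ)
    (hF : ∀ u, |F u| ≤ 1) (t : Multiset α) :
    |∑ T ∈ t.toFinset.powerset, (-1:ℤ)^T.card * F (t - T.val)| ≤ 2 ^ t.toFinset.card := by
  calc |∑ T ∈ t.toFinset.powerset, (-1:ℤ)^T.card * F (t - T.val)|
      ≤ ∑ T ∈ t.toFinset.powerset, |(-1:ℤ)^T.card * F (t - T.val)| :=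
        Finset.abs_sum_le_sum_abs _ _
    _ ≤ ∑ _T ∈ t.toFinset.powerset, 1 := by
        apply Finset.sum_le_sum
        intro T _
        rw [abs_mul, abs_pow, abs_neg, abs_one, one_pow, one_mul]
        exact hF _
    _ = 2 ^ t.toFinset.card := by
        simp [Finset.sum_const, Finset.card_powerset]

private lemma aux_minsum {β : Type*} (s : Finset β) (x : β → ℕ) (m : ℕ)
    (h : m ≤ ∑ P ∈ s, x P) : m ≤ ∑ P ∈ s, min m (x P) := by
  by_cases hex : ∃ P ∈ s, m ≤ x P
  · obtain ⟨P, hP, hxP⟩ := hex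
    calc m = min m (x P) := (min_eq_left hxP).symm
      _ ≤ ∑ P ∈ s, min m (x P) := Finset.single_le_sum (f := fun P => min m (x P)) (fun _ _ => Nat.zero_le _) hP
  · push_neg at hex
    calc m ≤ ∑ P ∈ s, x P := h
      _ = ∑ P ∈ s, min m (x P) := Finset.sum_congr rfl
          (fun P hP => (min_eq_right (le_of_lt (hex P hP))).symm)

end AuxCombinatorics

section AuxIdeal
open scoped Classical

variable (K : Type) [Field K] [NumberField K]

/-- The finset of prime ideals of `𝓞 K` above the rational prime `p`. -/
private noncomputable def spF (p : ℕ) : Finset (Ideal (𝓞 K)) :=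
  (normalizedFactors (Ideal.span {(p : 𝓞 K)})).toFinset

private lemma norm_span_nat (p : ℕ) :
    Ideal.absNorm (Ideal.span {(p : 𝓞 K)}) = p ^ Module.finrank ℚ K := by
  have b := Module.Free.chooseBasis ℤ (𝓞 K)
  have h1 : ((p : ℤ) : 𝓞 K) = algebraMap ℤ (𝓞 K) (p : ℤ) := rfl
  have h2 := Algebra.norm_algebraMap_of_basis b (p : ℤ)
  have h3 : Fintype.card (Module.Free.ChooseBasisIndex ℤ (𝓞 K)) = Module.finrank ℚ K := by
    rw [← Module.finrank_eq_card_chooseBasisIndex, NumberField.RingOfIntegers.rank]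
  have : ((p : ℕ) : 𝓞 K) = algebraMap ℤ (𝓞 K) (p : ℤ) := by push_cast; rfl
  rw [Ideal.absNorm_span_singleton, this, h2, h3]
  push_cast
  rw [Int.natAbs_pow]
  simp

private lemma span_nat_ne_bot {p : ℕ} (hp : p.Prime) :
    Ideal.span {(p : 𝓞 K)} ≠ ⊥ := by
  rw [Ne, Ideal.span_singleton_eq_bot, Nat.cast_eq_zero]
  exact hp.ne_zero

private lemma span_nat_ne_top {p : ℕ} (hp : p.Prime) :
    Ideal.span {(p : 𝓞 K)} ≠ ⊤ := by
  intro h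
  have h1 := norm_span_nat K p
  rw [h, Ideal.absNorm_top] at h1
  have hk : 0 < Module.finrank ℚ K := Module.finrank_pos
  have := Nat.one_lt_pow hk.ne' hp.one_lt
  omega

private lemma mem_spF {p : ℕ} (hp : p.Prime) {P : Ideal (𝓞 K)} :
    P ∈ spF K p ↔ P.IsPrime ∧ (p : 𝓞 K) ∈ P := by
  rw [spF, Multiset.mem_toFinset,
    Ideal.mem_normalizedFactors_iff (span_nat_ne_bot K hp),
    Ideal.span_singleton_le_iff_mem]

private lemma spF_prime_elt {p : ℕ} (hp : p.Prime) {P : Ideal (𝓞 K)}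
    (hP : P ∈ spF K p) : Prime P := by
  rw [spF, Multiset.mem_toFinset] at hP
  exact prime_of_normalized_factor _ hP

private lemma spF_maximal {p : ℕ} (hp : p.Prime) {P : Ideal (𝓞 K)}
    (hP : P ∈ spF K p) : P.IsMaximal := by
  have h1 := spF_prime_elt K hp hP
  exact (((mem_spF K hp).mp hP).1).isMaximal h1.ne_zero

private lemma spF_norm {p : ℕ} (hp : p.Prime) (fp : ℕ)
    (hfd : ∀ P : Ideal (𝓞 K), P.IsMaximal → (p : 𝓞 K) ∈ P → Ideal.absNorm P = p ^ fp)
    {P : Ideal (𝓞 K)} (hP : P ∈ spF K p) : Ideal.absNorm P = p ^ fp :=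
  hfd P (spF_maximal K hp hP) ((mem_spF K hp).mp hP).2

private lemma spF_nonempty {p : ℕ} (hp : p.Prime) : (spF K p).Nonempty := by
  obtain ⟨P, hPmax, hle⟩ := Ideal.exists_le_maximal _ (span_nat_ne_top K hp)
  exact ⟨P, (mem_spF K hp).mpr ⟨hPmax.isPrime, hle (Ideal.subset_span rfl)⟩⟩

private lemma fd_pos {p : ℕ} (hp : p.Prime) (fp : ℕ)
    (hfd : ∀ P : Ideal (𝓞 K), P.IsMaximal → (p : 𝓞 K) ∈ P → Ideal.absNorm P = p ^ fp) :
    1 ≤ fp := by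
  obtain ⟨P, hP⟩ := spF_nonempty K hp
  have h1 := spF_norm K hp fp hfd hP
  have h2 : Ideal.absNorm P ≠ 1 := by
    rw [Ne, Ideal.absNorm_eq_one_iff]
    exact (((mem_spF K hp).mp hP).1).ne_top
  rcases Nat.eq_zero_or_pos fp with h | h
  · rw [h, pow_zero] at h1; exact absurd h1 h2
  · exact h

private lemma spF_card {p : ℕ} (hp : p.Prime) (fp : ℕ)
    (hfd : ∀ P : Ideal (𝓞 K), P.IsMaximal → (p : 𝓞 K) ∈ P → Ideal.absNorm P = p ^ fp) :
    (spF K p).card * fp ≤ Module.finrank ℚ K := by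
  have hdvd : ((spF K p).val.prod : Ideal (𝓞 K)) ∣ Ideal.span {(p : 𝓞 K)} := by
    calc ((spF K p).val.prod : Ideal (𝓞 K))
        ∣ (normalizedFactors (Ideal.span {(p : 𝓞 K)})).prod :=
          Multiset.prod_dvd_prod_of_le (by simp only [spF, Multiset.toFinset_val]; exact Multiset.dedup_le _)
      _ = Ideal.span {(p : 𝓞 K)} :=
          _root_.prod_normalizedFactors_eq_self (span_nat_ne_bot K hp)
  have hnorm : Ideal.absNorm ((spF K p).val.prod) = p ^ ((spF K p).card * fp) := by
    have h1 : Ideal.absNorm ((spF K p).val.prod)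
        = ((spF K p).val.map Ideal.absNorm).prod :=
      map_multiset_prod (Ideal.absNorm : Ideal (𝓞 K) →*₀ ℕ) _
    have h2 : (spF K p).val.map Ideal.absNorm
        = Multiset.replicate (spF K p).card (p ^ fp) := by
      rw [Multiset.eq_replicate]
      refine ⟨by rw [Multiset.card_map]; rfl, ?_⟩
      intro b hb
      obtain ⟨P, hP, rfl⟩ := Multiset.mem_map.mp hb
      exact spF_norm K hp fp hfd hP
    rw [h1, h2, Multiset.prod_replicate, ← pow_mul, mul_comm fp]
  have h2 : Ideal.absNorm ((spF K p).val.prod) ∣ p ^ Module.finrank ℚ K := by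
    rw [← norm_span_nat K p]
    exact map_dvd Ideal.absNorm hdvd
  rw [hnorm] at h2
  exact (Nat.pow_dvd_pow_iff_le_right hp.one_lt).mp h2

private lemma mem_coprime_top {P : Ideal (𝓞 K)} (hP : P ≠ ⊤) {a b : ℕ}
    (hab : Nat.Coprime a b) (ha : (a : 𝓞 K) ∈ P) (hb : (b : 𝓞 K) ∈ P) : False := by
  obtain ⟨u, v, huv⟩ := Nat.isCoprime_iff_coprime.mpr hab
  apply hP
  rw [Ideal.eq_top_iff_one]
  have h1 : (1 : 𝓞 K) = u * (a : 𝓞 K) + v * (b : 𝓞 K) := by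
    have := congrArg (fun z : ℤ => (z : 𝓞 K)) huv
    push_cast at this
    exact this.symm
  rw [h1]
  exact Ideal.add_mem P (Ideal.mul_mem_left P _ ha) (Ideal.mul_mem_left P _ hb)

private lemma spF_disjoint {p q : ℕ} (hp : p.Prime) (hq : q.Prime) (hne : p ≠ q)
    {P : Ideal (𝓞 K)} (hPp : P ∈ spF K p) (hPq : P ∈ spF K q) : False :=
  mem_coprime_top K ((mem_spF K hp).mp hPp).1.ne_top
    ((Nat.coprime_primes hp hq).mpr hne)
    ((mem_spF K hp).mp hPp).2 ((mem_spF K hq).mp hPq).2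

private lemma exists_rat_prime_mem {P : Ideal (𝓞 K)} (hP : Prime P) :
    ∃ ℓ : ℕ, ℓ.Prime ∧ (ℓ : 𝓞 K) ∈ P := by
  have hprime : P.IsPrime := Ideal.isPrime_of_prime hP
  have hne : P ≠ ⊤ := hprime.ne_top
  have hbot : P ≠ ⊥ := hP.ne_zero
  have hN0 : Ideal.absNorm P ≠ 0 := by
    rw [Ne, Ideal.absNorm_eq_zero_iff]; exact hbot
  have hN1 : Ideal.absNorm P ≠ 1 := by
    rw [Ne, Ideal.absNorm_eq_one_iff]; exact hne
  have hmem : ((Ideal.absNorm P : ℕ) : 𝓞 K) ∈ P := Ideal.absNorm_mem P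
  suffices h : ∀ N : ℕ, N ≠ 0 → N ≠ 1 → ((N : 𝓞 K) ∈ P) →
      ∃ ℓ : ℕ, ℓ.Prime ∧ (ℓ : 𝓞 K) ∈ P from h _ hN0 hN1 hmem
  intro N
  induction N using Nat.strong_induction_on with
  | _ N ih =>
    intro h0 h1 hmemN
    obtain ⟨ℓ, hℓ, hdvd⟩ := Nat.exists_prime_and_dvd h1
    obtain ⟨c, rfl⟩ := hdvd
    push_cast at hmemN
    rcases hprime.mem_or_mem hmemN with h | h
    · exact ⟨ℓ, hℓ, h⟩
    · have hc0 : c ≠ 0 := by rintro rfl; simp at h0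
      have hc1 : c ≠ 1 := by
        rintro rfl
        exact hne (Ideal.eq_top_iff_one P |>.mpr (by simpa using h))
      exact ih c (by nlinarith [hℓ.two_le, Nat.pos_of_ne_zero hc0]) hc0 hc1 h

private lemma factorization_absNorm_prime_ideal (fd : ℕ → ℕ)
    (hfd : ∀ p : ℕ, p.Prime → ∀ P : Ideal (𝓞 K), P.IsMaximal → (p : 𝓞 K) ∈ P →
      Ideal.absNorm P = p ^ fd p)
    {P : Ideal (𝓞 K)} (hP : Prime P) {ℓ : ℕ} (hℓ : ℓ.Prime) :
    (Ideal.absNorm P).factorization ℓ = if P ∈ spF K ℓ then fd ℓ else 0 := by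
  obtain ⟨ℓ₀, hℓ₀, hmem⟩ := exists_rat_prime_mem K hP
  have hmax : P.IsMaximal := (Ideal.isPrime_of_prime hP).isMaximal hP.ne_zero
  have hnorm : Ideal.absNorm P = ℓ₀ ^ fd ℓ₀ := hfd ℓ₀ hℓ₀ P hmax hmem
  rw [hnorm, hℓ₀.factorization_pow, Finsupp.single_apply]
  by_cases h : ℓ₀ = ℓ
  · subst h
    rw [if_pos rfl, if_pos ((mem_spF K hℓ₀).mpr ⟨hmax.isPrime, hmem⟩)]
  · rw [if_neg h, if_neg]
    intro hPl
    exact mem_coprime_top K hmax.isPrime.ne_top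
      ((Nat.coprime_primes hℓ₀ hℓ).mpr h) hmem ((mem_spF K hℓ).mp hPl).2

private lemma factorization_absNorm_prod (fd : ℕ → ℕ)
    (hfd : ∀ p : ℕ, p.Prime → ∀ P : Ideal (𝓞 K), P.IsMaximal → (p : 𝓞 K) ∈ P →
      Ideal.absNorm P = p ^ fd p)
    (t : Multiset (Ideal (𝓞 K))) (ht : ∀ P ∈ t, Prime P) {ℓ : ℕ} (hℓ : ℓ.Prime) :
    (Ideal.absNorm t.prod).factorization ℓ = fd ℓ * ∑ P ∈ spF K ℓ, t.count P := by
  induction t using Multiset.induction with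
  | empty => simp [Ideal.one_eq_top]
  | cons P t ih =>
    have hP : Prime P := ht P (Multiset.mem_cons_self _ _)
    have ht' : ∀ Q ∈ t, Prime Q := fun Q hQ => ht Q (Multiset.mem_cons_of_mem hQ)
    have hprod_ne : t.prod ≠ 0 := Multiset.prod_ne_zero_of_prime t ht'
    have hP_ne : Ideal.absNorm P ≠ 0 := by
      rw [Ne, Ideal.absNorm_eq_zero_iff]; exact hP.ne_zero
    have hprodnorm_ne : Ideal.absNorm t.prod ≠ 0 := by
      rw [Ne, Ideal.absNorm_eq_zero_iff]; exact hprod_ne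
    rw [Multiset.prod_cons, _root_.map_mul (Ideal.absNorm : Ideal (𝓞 K) →*₀ ℕ), Nat.factorization_mul hP_ne hprodnorm_ne,
      Finsupp.add_apply, ih ht', factorization_absNorm_prime_ideal K fd hfd hP hℓ]
    have hcount : ∀ Q ∈ spF K ℓ, (P ::ₘ t).count Q
        = t.count Q + (if Q = P then 1 else 0) := by
      intro Q _
      rw [Multiset.count_cons]
    rw [Finset.sum_congr rfl hcount, Finset.sum_add_distrib, Finset.sum_ite_eq' (spF K ℓ) P]
    by_cases hmem : P ∈ spF K ℓ
    · rw [if_pos hmem, if_pos hmem]; ring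
    · rw [if_neg hmem, if_neg hmem]; ring

end AuxIdeal

/-- n* = ∏ p^{f_p ⌈α_p/f_p⌉}, where fd gives the residue degrees. -/
def nStar (fd : ℕ → ℕ) (n : ℕ) : ℕ :=
  ∏ p ∈ n.primeFactors, p ^ (fd p * ((n.factorization p + fd p - 1) / fd p))

/-- existence of the inclusion-exclusion function μ_n on ideals
with 1_{n ∣ N𝔮} = Σ_𝔫 μ_n(𝔫) 1_{𝔫 ∣ 𝔮}, supported on n* ∣ N𝔫 ∣ n^k, and
bounded by 2^{k ω(n)}. -/
theorem exists_moebius_inversion_function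
    (K : Type) [Field K] [NumberField K] [IsGalois ℚ K] (k : ℕ)
    (hdeg : Module.finrank ℚ K = k)
    (fd : ℕ → ℕ)
    -- fd p is the residue degree of the primes above p:
    (hfd : ∀ p : ℕ, p.Prime → ∀ P : Ideal (𝓞 K), P.IsMaximal → (p : 𝓞 K) ∈ P →
      Ideal.absNorm P = p ^ fd p)
    (n : ℕ) (hn : 0 < n) :
    ∃ μ : Ideal (𝓞 K) → ℤ,
      (∀ 𝔮 : Ideal (𝓞 K), 𝔮 ≠ 0 →
        ((if n ∣ Ideal.absNorm 𝔮 then (1 : ℝ) else 0)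
          = ∑' 𝔫 : Ideal (𝓞 K), (μ 𝔫 : ℝ) * (if 𝔫 ∣ 𝔮 then 1 else 0))) ∧
      (∀ 𝔫 : Ideal (𝓞 K), μ 𝔫 ≠ 0 →
        nStar fd n ∣ Ideal.absNorm 𝔫 ∧ Ideal.absNorm 𝔫 ∣ n ^ k) ∧
      (∀ 𝔮 : Ideal (𝓞 K), |μ 𝔮| ≤ 2 ^ (k * n.primeFactors.card)) := by
  classical
  -- abbreviations
  set R := 𝓞 K with hR
  have hk : 0 < k := hdeg ▸ Module.finrank_pos
  have hpf : ∀ p ∈ n.primeFactors, p.Prime := fun p hp => Nat.prime_of_mem_primeFactors hp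
  have hα : ∀ p ∈ n.primeFactors, 1 ≤ n.factorization p := fun p hp =>
    (Nat.Prime.factorization_pos_of_dvd (hpf p hp) hn.ne'
      (Nat.dvd_of_mem_primeFactors hp))
  have hf1 : ∀ p ∈ n.primeFactors, 1 ≤ fd p := fun p hp =>
    fd_pos K (hpf p hp) (fd p) (hfd p (hpf p hp))
  -- the capped exponents
  set m : ℕ → ℕ := fun p => (n.factorization p + fd p - 1) / fd p with hm_def
  have hm1 : ∀ p ∈ n.primeFactors, 1 ≤ m p := by
    intro p hp
    have h1 := hα p hp; have h2 := hf1 p hp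
    rw [hm_def]
    rw [Nat.le_div_iff_mul_le (by omega)]
    omega
  have hmα : ∀ p ∈ n.primeFactors, m p ≤ n.factorization p := by
    intro p hp
    have h1 := hα p hp; have h2 := hf1 p hp
    rw [hm_def, Nat.div_le_iff_le_mul_add_pred (by omega)]
    have h3 : n.factorization p ≤ fd p * n.factorization p :=
      Nat.le_mul_of_pos_left _ (by omega)
    generalize fd p * n.factorization p = Y at h3 ⊢
    omega
  have hceil : ∀ p ∈ n.primeFactors, ∀ X : ℕ,
      (n.factorization p ≤ fd p * X ↔ m p ≤ X) := by
    intro p hp X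
    have h1 := hα p hp; have h2 := hf1 p hp
    rw [hm_def, Nat.div_le_iff_le_mul_add_pred (by omega)]
    generalize fd p * X = Y
    omega
  -- the master multiset
  set M : Multiset (Ideal R) := ∑ p ∈ n.primeFactors, m p • (spF K p).val with hM_def
  have hMexists : ∀ P ∈ M, ∃ p ∈ n.primeFactors, P ∈ spF K p := by
    intro P hP
    rw [hM_def, Multiset.mem_sum] at hP
    obtain ⟨p, hp, hmem⟩ := hP
    rw [Multiset.mem_nsmul] at hmem
    exact ⟨p, hp, by simpa using hmem.2⟩
  have hMprime : ∀ P ∈ M, Prime P := by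
    intro P hP
    obtain ⟨p, hp, hmem⟩ := hMexists P hP
    exact spF_prime_elt K (hpf p hp) hmem
  have hcountM : ∀ p ∈ n.primeFactors, ∀ P ∈ spF K p, M.count P = m p := by
    intro p hp P hP
    rw [hM_def, Multiset.count_sum']
    rw [Finset.sum_eq_single p]
    · rw [Multiset.count_nsmul, Multiset.count_eq_one_of_mem (spF K p).nodup hP, mul_one]
    · intro q hq hqp
      rw [Multiset.count_nsmul, Multiset.count_eq_zero_of_notMem, mul_zero]
      intro hmem
      exact spF_disjoint K (hpf q hq) (hpf p hp) hqp (by simpa using hmem) hP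
    · intro h; exact absurd hp h
  have hcountM0 : ∀ ℓ : ℕ, ℓ.Prime → ℓ ∉ n.primeFactors → ∀ P ∈ spF K ℓ,
      M.count P = 0 := by
    intro ℓ hℓ hℓn P hP
    rw [Multiset.count_eq_zero]
    intro hPM
    obtain ⟨p, hp, hmem⟩ := hMexists P hPM
    exact spF_disjoint K (hpf p hp) hℓ (fun h => hℓn (h ▸ hp)) hmem hP
  -- basic nonvanishing
  have hprodne : ∀ t : Multiset (Ideal R), (∀ P ∈ t, Prime P) → t.prod ≠ 0 :=
    fun t ht => Multiset.prod_ne_zero_of_prime t ht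
  have hnormne : ∀ t : Multiset (Ideal R), (∀ P ∈ t, Prime P) →
      Ideal.absNorm t.prod ≠ 0 := by
    intro t ht
    rw [Ne, Ideal.absNorm_eq_zero_iff]
    exact hprodne t ht
  have hNF : ∀ t : Multiset (Ideal R), (∀ P ∈ t, Prime P) →
      normalizedFactors t.prod = t := fun t ht => normalizedFactors_prod_of_prime ht
  -- the indicator function and the Möbius coefficients
  set Fm : Multiset (Ideal R) → ℤ :=
    fun t => if n ∣ Ideal.absNorm t.prod then 1 else 0 with hFm_def
  set coef : Multiset (Ideal R) → ℤ :=
    fun t => ∑ T ∈ t.toFinset.powerset, (-1:ℤ)^T.card * Fm (t - T.val) with hcoef_def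
  set μ : Ideal R → ℤ :=
    fun 𝔫 => if 𝔫 ≠ 0 ∧ normalizedFactors 𝔫 ≤ M then coef (normalizedFactors 𝔫) else 0
    with hμ_def
  -- divisibility criterion for n
  have hNdvd : ∀ x : ℕ, x ≠ 0 → (n ∣ x ↔
      ∀ p ∈ n.primeFactors, n.factorization p ≤ x.factorization p) := by
    intro x hx
    rw [← Nat.factorization_le_iff_dvd hn.ne' hx, Finsupp.le_iff,
      Nat.support_factorization]
  -- the key norm computation
  have hvp : ∀ t : Multiset (Ideal R), (∀ P ∈ t, Prime P) → ∀ ℓ : ℕ, ℓ.Prime →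
      (Ideal.absNorm t.prod).factorization ℓ = fd ℓ * ∑ P ∈ spF K ℓ, t.count P :=
    fun t ht ℓ hℓ => factorization_absNorm_prod K fd hfd t ht hℓ
  -- monotonicity: if a submultiset's product has norm divisible by n, so does the whole
  have hmono : ∀ t u : Multiset (Ideal R), (∀ P ∈ u, Prime P) → t ≤ u →
      n ∣ Ideal.absNorm t.prod → n ∣ Ideal.absNorm u.prod := by
    intro t u hu htu hdvd
    exact hdvd.trans (map_dvd Ideal.absNorm (Multiset.prod_dvd_prod_of_le htu))
  -- support of μ forces n ∣ norm
  have hsupp_dvd : ∀ t : Multiset (Ideal R), (∀ P ∈ t, Prime P) →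
      coef t ≠ 0 → n ∣ Ideal.absNorm t.prod := by
    intro t ht hne
    by_contra hnd
    apply hne
    rw [hcoef_def]
    apply Finset.sum_eq_zero
    intro T hT
    have h1 : Fm (t - T.val) = 0 := by
      rw [hFm_def]
      simp only
      rw [if_neg]
      intro hd
      exact hnd (hmono _ t ht (Multiset.sub_le_self _ _) hd)
    rw [h1, mul_zero]
  -- main equivalence: norm of gcd with M captures divisibility by n
  have hFq : ∀ 𝔮 : Ideal R, 𝔮 ≠ 0 →
      (n ∣ Ideal.absNorm ((M ∩ normalizedFactors 𝔮).prod) ↔ n ∣ Ideal.absNorm 𝔮) := by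
    intro 𝔮 h𝔮
    set q := normalizedFactors 𝔮 with hq_def
    have hqprime : ∀ P ∈ q, Prime P := fun P hP => prime_of_normalized_factor P hP
    have hwprime : ∀ P ∈ M ∩ q, Prime P := fun P hP =>
      hMprime P (Multiset.mem_of_le (Multiset.inter_le_left) hP)
    have h𝔮norm : Ideal.absNorm 𝔮 = Ideal.absNorm q.prod := by
      rw [hq_def, _root_.prod_normalizedFactors_eq_self h𝔮]
    have h1 : Ideal.absNorm 𝔮 ≠ 0 := by
      rw [h𝔮norm]; exact hnormne q hqprime
    have h2 : Ideal.absNorm ((M ∩ q).prod) ≠ 0 := hnormne _ hwprime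
    rw [hNdvd _ h1, hNdvd _ h2]
    apply forall_congr'
    intro p
    apply imp_congr_right
    intro hp
    rw [h𝔮norm, hvp q hqprime p (hpf p hp), hvp (M ∩ q) hwprime p (hpf p hp)]
    have hcnt : ∀ P ∈ spF K p, (M ∩ q).count P = min (m p) (q.count P) := by
      intro P hP
      rw [Multiset.count_inter, hcountM p hp P hP]
    rw [Finset.sum_congr rfl hcnt, hceil p hp, hceil p hp]
    constructor
    · intro h
      calc m p ≤ ∑ P ∈ spF K p, min (m p) (q.count P) := h
        _ ≤ ∑ P ∈ spF K p, q.count P :=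
          Finset.sum_le_sum (fun P _ => min_le_right _ _)
    · intro h
      exact aux_minsum _ _ _ h
  -- the support finset
  set D : Finset (Ideal R) := (M.powerset.toFinset).image Multiset.prod with hD_def
  have hμzero : ∀ 𝔫 : Ideal R, 𝔫 ∉ D → μ 𝔫 = 0 := by
    intro 𝔫 h𝔫
    rw [hμ_def]
    simp only
    rw [if_neg]
    rintro ⟨h1, h2⟩
    apply h𝔫
    rw [hD_def]
    apply Finset.mem_image.mpr
    refine ⟨normalizedFactors 𝔫, ?_, _root_.prod_normalizedFactors_eq_self h1⟩
    rw [Multiset.mem_toFinset, Multiset.mem_powerset]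
    exact h2
  have hinj : ∀ t ∈ M.powerset.toFinset, ∀ u ∈ M.powerset.toFinset,
      t.prod = u.prod → t = u := by
    intro t ht u hu h
    rw [Multiset.mem_toFinset, Multiset.mem_powerset] at ht hu
    have h1 := hNF t (fun P hP => hMprime P (Multiset.mem_of_le ht hP))
    have h2 := hNF u (fun P hP => hMprime P (Multiset.mem_of_le hu hP))
    rw [← h1, ← h2, h]
  have hμprod : ∀ t : Multiset (Ideal R), t ≤ M → μ t.prod = coef t := by
    intro t ht
    have hprime : ∀ P ∈ t, Prime P := fun P hP => hMprime P (Multiset.mem_of_le ht hP)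
    rw [hμ_def]
    simp only
    rw [hNF t hprime, if_pos ⟨hprodne t hprime, ht⟩]
  refine ⟨μ, ?_, ?_, ?_⟩
  · -- (i) the inversion identity
    intro 𝔮 h𝔮
    set q := normalizedFactors 𝔮 with hq_def
    have hqprime : ∀ P ∈ q, Prime P := fun P hP => prime_of_normalized_factor P hP
    have main_int : (if n ∣ Ideal.absNorm 𝔮 then (1:ℤ) else 0)
        = ∑ 𝔫 ∈ D, μ 𝔫 * (if 𝔫 ∣ 𝔮 then 1 else 0) := by
      rw [hD_def, Finset.sum_image hinj]
      have hterm : ∀ t ∈ M.powerset.toFinset,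
          μ t.prod * (if t.prod ∣ 𝔮 then (1:ℤ) else 0)
          = if t ≤ q then coef t else 0 := by
        intro t ht
        rw [Multiset.mem_toFinset, Multiset.mem_powerset] at ht
        have hprime : ∀ P ∈ t, Prime P := fun P hP =>
          hMprime P (Multiset.mem_of_le ht hP)
        have hdvd_iff : t.prod ∣ 𝔮 ↔ t ≤ q := by
          rw [dvd_iff_normalizedFactors_le_normalizedFactors (hprodne t hprime) h𝔮,
            hNF t hprime]
        rw [hμprod t ht]
        by_cases h : t.prod ∣ 𝔮
        · rw [if_pos h, if_pos (hdvd_iff.mp h), mul_one]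
        · rw [if_neg h, if_neg (fun hle => h (hdvd_iff.mpr hle)), mul_zero]
      rw [Finset.sum_congr rfl hterm, ← Finset.sum_filter]
      have hset : M.powerset.toFinset.filter (fun t => t ≤ q)
          = (M ∩ q).powerset.toFinset := by
        ext u
        rw [Finset.mem_filter, Multiset.mem_toFinset, Multiset.mem_powerset,
          Multiset.mem_toFinset, Multiset.mem_powerset]
        constructor
        · rintro ⟨h1, h2⟩; exact Multiset.le_inter h1 h2
        · intro h
          exact ⟨h.trans (Multiset.inter_le_left),
            h.trans (Multiset.inter_le_right)⟩
      rw [hset]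
      have := aux_moebius Fm (M ∩ q)
      rw [hcoef_def]
      simp only
      rw [this, hFm_def]
      simp only
      by_cases h : n ∣ Ideal.absNorm 𝔮
      · rw [if_pos h, if_pos ((hFq 𝔮 h𝔮).mpr h)]
      · rw [if_neg h, if_neg (fun hc => h ((hFq 𝔮 h𝔮).mp hc))]
    -- now pass to ℝ
    rw [tsum_eq_sum (s := D) (fun 𝔫 h𝔫 => by rw [hμzero 𝔫 h𝔫]; simp)]
    have cast_eq : ∀ 𝔫 : Ideal R, (μ 𝔫 : ℝ) * (if 𝔫 ∣ 𝔮 then (1:ℝ) else 0)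
        = ((μ 𝔫 * (if 𝔫 ∣ 𝔮 then (1:ℤ) else 0) : ℤ) : ℝ) := by
      intro 𝔫
      split_ifs with h <;> push_cast <;> ring
    rw [Finset.sum_congr rfl (fun 𝔫 _ => cast_eq 𝔫), ← Int.cast_sum, ← main_int]
    by_cases h : n ∣ Ideal.absNorm 𝔮
    · rw [if_pos h, if_pos h]; norm_num
    · rw [if_neg h, if_neg h]; norm_num
  · -- (ii) support
    intro 𝔫 hμ𝔫
    have h1 : 𝔫 ≠ 0 ∧ normalizedFactors 𝔫 ≤ M := by
      by_contra h
      exact hμ𝔫 (by rw [hμ_def]; simp only; rw [if_neg h])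
    obtain ⟨h𝔫0, hle⟩ := h1
    set t := normalizedFactors 𝔫 with ht_def
    have hprime : ∀ P ∈ t, Prime P := fun P hP => prime_of_normalized_factor P hP
    have h𝔫t : 𝔫 = t.prod := (_root_.prod_normalizedFactors_eq_self h𝔫0).symm
    have hcoefne : coef t ≠ 0 := by
      intro h
      exact hμ𝔫 (by rw [hμ_def]; simp only; rw [if_pos ⟨h𝔫0, hle⟩, h])
    have hndvd : n ∣ Ideal.absNorm 𝔫 := by
      rw [h𝔫t]; exact hsupp_dvd t hprime hcoefne
    have hnorm𝔫ne : Ideal.absNorm 𝔫 ≠ 0 := by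
      rw [Ne, Ideal.absNorm_eq_zero_iff]; exact h𝔫0
    -- factorization values
    have hvpt : ∀ ℓ : ℕ, ℓ.Prime →
        (Ideal.absNorm 𝔫).factorization ℓ = fd ℓ * ∑ P ∈ spF K ℓ, t.count P := by
      intro ℓ hℓ
      rw [h𝔫t]; exact hvp t hprime ℓ hℓ
    constructor
    · -- nStar ∣ absNorm 𝔫
      have hnstar_ne : nStar fd n ≠ 0 := by
        rw [nStar]
        apply Finset.prod_ne_zero_iff.mpr
        intro p hp
        exact pow_ne_zero _ (hpf p hp).ne_zero
      rw [← Nat.factorization_le_iff_dvd hnstar_ne hnorm𝔫ne, Finsupp.le_iff]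
      intro ℓ hℓsupp
      have hℓprime : ℓ.Prime := Nat.prime_of_mem_primeFactors
        (Nat.support_factorization _ ▸ hℓsupp)
      have hnstar_fact : (nStar fd n).factorization ℓ
          = if ℓ ∈ n.primeFactors then fd ℓ * m ℓ else 0 := by
        rw [nStar, Nat.factorization_prod
          (fun p hp => pow_ne_zero _ (hpf p hp).ne_zero)]
        rw [Finsupp.finset_sum_apply]
        rw [Finset.sum_congr rfl (fun p hp => by
          rw [(hpf p hp).factorization_pow, Finsupp.single_apply])]
        rw [Finset.sum_ite_eq' n.primeFactors ℓ]
      rw [hnstar_fact]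
      by_cases hℓn : ℓ ∈ n.primeFactors
      · rw [if_pos hℓn, hvpt ℓ hℓprime]
        have hX : m ℓ ≤ ∑ P ∈ spF K ℓ, t.count P := by
          rw [← hceil ℓ hℓn]
          rw [← hvpt ℓ hℓprime]
          exact (Nat.factorization_le_iff_dvd hn.ne' hnorm𝔫ne).mpr hndvd ℓ
        exact Nat.mul_le_mul_left _ hX
      · rw [if_neg hℓn]; exact Nat.zero_le _
    · -- absNorm 𝔫 ∣ n ^ k
      have hnk_ne : n ^ k ≠ 0 := pow_ne_zero _ hn.ne'
      rw [← Nat.factorization_le_iff_dvd hnorm𝔫ne hnk_ne, Finsupp.le_iff]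
      intro ℓ hℓsupp
      have hℓprime : ℓ.Prime := Nat.prime_of_mem_primeFactors
        (Nat.support_factorization _ ▸ hℓsupp)
      rw [Nat.factorization_pow, Finsupp.smul_apply, smul_eq_mul, hvpt ℓ hℓprime]
      by_cases hℓn : ℓ ∈ n.primeFactors
      · have hcnt : ∀ P ∈ spF K ℓ, t.count P ≤ m ℓ := by
          intro P hP
          calc t.count P ≤ M.count P := Multiset.le_iff_count.mp hle P
            _ = m ℓ := hcountM ℓ hℓn P hP
        have h1 : ∑ P ∈ spF K ℓ, t.count P ≤ (spF K ℓ).card * m ℓ := by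
          calc ∑ P ∈ spF K ℓ, t.count P ≤ ∑ _P ∈ spF K ℓ, m ℓ :=
              Finset.sum_le_sum hcnt
            _ = (spF K ℓ).card * m ℓ := by rw [Finset.sum_const, smul_eq_mul]
        have h2 : (spF K ℓ).card * fd ℓ ≤ k :=
          hdeg ▸ spF_card K hℓprime (fd ℓ) (hfd ℓ hℓprime)
        calc fd ℓ * ∑ P ∈ spF K ℓ, t.count P ≤ fd ℓ * ((spF K ℓ).card * m ℓ) :=
            Nat.mul_le_mul_left _ h1
          _ = (spF K ℓ).card * fd ℓ * m ℓ := by ring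
          _ ≤ k * m ℓ := Nat.mul_le_mul_right _ h2
          _ ≤ k * n.factorization ℓ := Nat.mul_le_mul_left _ (hmα ℓ hℓn)
      · have hzero : ∀ P ∈ spF K ℓ, t.count P = 0 := by
          intro P hP
          have := Multiset.le_iff_count.mp hle P
          rw [hcountM0 ℓ hℓprime hℓn P hP] at this
          omega
        rw [Finset.sum_congr rfl hzero]
        simp
  · -- (iii) the bound
    intro 𝔮
    rw [hμ_def]
    simp only
    by_cases h : 𝔮 ≠ 0 ∧ normalizedFactors 𝔮 ≤ M
    · rw [if_pos h]
      have hFm1 : ∀ u : Multiset (Ideal R), |Fm u| ≤ 1 := by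
        intro u
        rw [hFm_def]
        simp only
        split_ifs <;> norm_num
      calc |coef (normalizedFactors 𝔮)| ≤ 2 ^ (normalizedFactors 𝔮).toFinset.card :=
          aux_bound Fm hFm1 _
        _ ≤ 2 ^ (k * n.primeFactors.card) := by
          apply pow_le_pow_right₀ (by norm_num : (1:ℤ) ≤ 2)
          have hsub : (normalizedFactors 𝔮).toFinset ⊆ M.toFinset :=
            Multiset.toFinset_subset.mpr (Multiset.subset_of_le h.2)
          have hbiUnion : M.toFinset ⊆ n.primeFactors.biUnion (fun p => spF K p) := by
            intro P hP
            rw [Multiset.mem_toFinset] at hP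
            obtain ⟨p, hp, hmem⟩ := hMexists P hP
            exact Finset.mem_biUnion.mpr ⟨p, hp, hmem⟩
          calc (normalizedFactors 𝔮).toFinset.card ≤ M.toFinset.card :=
              Finset.card_le_card hsub
            _ ≤ (n.primeFactors.biUnion (fun p => spF K p)).card :=
              Finset.card_le_card hbiUnion
            _ ≤ ∑ p ∈ n.primeFactors, (spF K p).card := Finset.card_biUnion_le
            _ ≤ ∑ _p ∈ n.primeFactors, k := by
              apply Finset.sum_le_sum
              intro p hp
              have h1 := spF_card K (hpf p hp) (fd p) (hfd p (hpf p hp))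
              have h2 := hf1 p hp
              have h3 : (spF K p).card ≤ (spF K p).card * fd p :=
                Nat.le_mul_of_pos_right _ (by omega)
              omega
            _ = k * n.primeFactors.card := by
              rw [Finset.sum_const, smul_eq_mul, mul_comm]
    · rw [if_neg h]
      simp only [abs_zero]
      positivity
end
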